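/- Let G and H be finite graphs (loopless mixed graphs with self-paired arc sets, i.e. simple undirected graphs). Then G and H are TF-isomorphic if and only if their canonical double covers CDC(G) and CDC(H) are isomorphic (as graphs, under an arbitrary isomorphism, not necessarily colour-preserving). -/

import Mathlib

/-- The canonical double cover of a simple graph `G`: the simple graph on
`V × Bool` in which `(u, i)` is adjacent to `(v, j)` iff `i ≠ j` and `u` is adjacent
to `v` in `G`. -/
def CDC {V : Type*} (G : SimpleGraph V) : SimpleGraph (V × Bool) where
  Adj p q := p.2 ≠ q.2 ∧ G.Adj p.1 q.1
  symm := ⟨fun p q h => ⟨h.1.symm, h.2.symm⟩⟩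
  loopless := ⟨fun p h => h.1 rfl⟩

set_option linter.unusedSectionVars false

namespace CDCAux

open SimpleGraph

@[simp] lemma cdc_adj {V : Type*} {G : SimpleGraph V} (p q : V × Bool) :
    (CDC G).Adj p q ↔ p.2 ≠ q.2 ∧ G.Adj p.1 q.1 := Iff.rfl

/-- The colour swap on vertices of a double cover. -/
def vswap {V : Type*} : V × Bool → V × Bool := fun p => (p.1, !p.2)

@[simp] lemma vswap_fst {V : Type*} (p : V × Bool) : (vswap p).1 = p.1 := rfl
@[simp] lemma vswap_snd {V : Type*} (p : V × Bool) : (vswap p).2 = !p.2 := rfl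

@[simp] lemma vswap_vswap {V : Type*} (p : V × Bool) : vswap (vswap p) = p := by
  cases p with
  | mk u b => simp [vswap]

lemma vswap_injective {V : Type*} : Function.Injective (vswap (V := V)) := by
  intro a b h
  have := congrArg vswap h
  simpa using this

@[simp] lemma vswap_adj {V : Type*} {G : SimpleGraph V} (p q : V × Bool) :
    (CDC G).Adj (vswap p) (vswap q) ↔ (CDC G).Adj p q := by
  simp only [cdc_adj, vswap_fst, vswap_snd]
  cases p with
  | mk u i =>
    cases q with
    | mk v j => cases i <;> cases j <;> simp

/-- The colour swap as a graph automorphism of the double cover. -/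
def swapIso {V : Type*} (G : SimpleGraph V) : CDC G ≃g CDC G :=
  ⟨⟨vswap, vswap, vswap_vswap, vswap_vswap⟩, by
    intro a b
    exact vswap_adj a b⟩

section Key

variable {V W : Type*} {G : SimpleGraph V} {H : SimpleGraph W}

private lemma xor_helper : ∀ (a b c d : Bool), a ≠ b → c ≠ d → xor a c = xor b d := by
  decide

variable (f : CDC G ≃g CDC H)

lemma eps_aux : ∀ (v w : V × Bool) (_ : (CDC G).Walk v w),
    xor v.2 (f v).2 = xor w.2 (f w).2 := by
  intro v w p
  induction p with
  | nil => rfl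
  | cons h p ih =>
    refine Eq.trans ?_ ih
    have h2 : (CDC H).Adj (f _) (f _) := f.map_adj_iff.mpr h
    exact xor_helper _ _ _ _ h.1 h2.1

/-- Whether `f` flips colours on a given connected component. -/
def eps : (CDC G).ConnectedComponent → Bool :=
  ConnectedComponent.lift (fun x => xor x.2 (f x).2) (fun v w p _ => eps_aux f v w p)

@[simp] lemma eps_mk (x : V × Bool) :
    eps f ((CDC G).connectedComponentMk x) = xor x.2 (f x).2 := rfl

/-- The equivalence of connected components induced by `f`. -/
def Fc : (CDC G).ConnectedComponent ≃ (CDC H).ConnectedComponent :=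
  f.connectedComponentEquiv

@[simp] lemma Fc_mk (x : V × Bool) :
    Fc f ((CDC G).connectedComponentMk x) = (CDC H).connectedComponentMk (f x) :=
  ConnectedComponent.map_mk _ _

/-- The involution on components induced by the colour swap. -/
def sigC (G : SimpleGraph V) : (CDC G).ConnectedComponent → (CDC G).ConnectedComponent :=
  ConnectedComponent.map (swapIso G).toHom

@[simp] lemma sigC_mk (x : V × Bool) :
    sigC G ((CDC G).connectedComponentMk x) = (CDC G).connectedComponentMk (vswap x) :=
  ConnectedComponent.map_mk _ _

@[simp] lemma sigC_sigC (K : (CDC G).ConnectedComponent) : sigC G (sigC G K) = K := by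
  refine ConnectedComponent.ind (fun x => ?_) K
  simp

def phi : (CDC G).ConnectedComponent → (CDC H).ConnectedComponent :=
  fun K => cond (eps f K) (sigC H (Fc f K)) (Fc f K)

def psi : (CDC G).ConnectedComponent → (CDC H).ConnectedComponent :=
  fun K => sigC H (phi f (sigC G K))

def theta : (CDC G).ConnectedComponent × Bool → (CDC H).ConnectedComponent × Bool :=
  fun p => cond p.2 (psi f p.1, !(eps f (sigC G p.1))) (phi f p.1, eps f p.1)

def thetaInv : (CDC H).ConnectedComponent × Bool → (CDC G).ConnectedComponent × Bool :=
  fun p => cond p.2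
    (cond (eps f ((Fc f).symm (sigC H p.1)))
      ((Fc f).symm (sigC H p.1), false)
      (sigC G ((Fc f).symm (sigC H p.1)), true))
    (cond (eps f ((Fc f).symm p.1))
      (sigC G ((Fc f).symm p.1), true)
      ((Fc f).symm p.1, false))

lemma theta_left_inv : Function.LeftInverse (thetaInv f) (theta f) := by
  rintro ⟨K, b⟩
  cases b
  · cases hK : eps f K
    · simp [theta, thetaInv, phi, hK, Equiv.symm_apply_apply]
    · simp [theta, thetaInv, phi, hK, Equiv.symm_apply_apply]
  · cases hK : eps f (sigC G K)
    · simp [theta, thetaInv, phi, psi, hK, Equiv.symm_apply_apply]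
    · simp [theta, thetaInv, phi, psi, hK, Equiv.symm_apply_apply]

variable [DecidableEq ((CDC H).ConnectedComponent)]

def rset : (CDC G).ConnectedComponent → Finset ((CDC H).ConnectedComponent) :=
  fun K => {phi f K, psi f K}

lemma mem_rset {K : (CDC G).ConnectedComponent} {D : (CDC H).ConnectedComponent} :
    D ∈ rset f K ↔ D = phi f K ∨ D = psi f K := by
  simp [rset]

/-- The colour-respecting vertex map on components where `f` is used directly. -/
def PhiV : V × Bool → W × Bool :=
  fun x => cond (eps f ((CDC G).connectedComponentMk x)) (vswap (f x)) (f x)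

/-- The colour-respecting vertex map on components where `f ∘ vswap` is used. -/
def PsiV : V × Bool → W × Bool :=
  fun x => cond (eps f ((CDC G).connectedComponentMk (vswap x)))
    (f (vswap x)) (vswap (f (vswap x)))

lemma comp_PhiV (x : V × Bool) :
    (CDC H).connectedComponentMk (PhiV f x) = phi f ((CDC G).connectedComponentMk x) := by
  unfold PhiV phi
  cases hK : eps f ((CDC G).connectedComponentMk x) <;> simp

lemma comp_PsiV (x : V × Bool) :
    (CDC H).connectedComponentMk (PsiV f x) = psi f ((CDC G).connectedComponentMk x) := by
  unfold PsiV psi phi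
  rw [show (CDC G).connectedComponentMk (vswap x)
      = sigC G ((CDC G).connectedComponentMk x) from (sigC_mk x).symm]
  cases hK : eps f (sigC G ((CDC G).connectedComponentMk x)) <;> simp

lemma snd_PhiV (x : V × Bool) : (PhiV f x).2 = x.2 := by
  unfold PhiV
  rw [eps_mk]
  cases hb : x.2 <;> cases hf : (f x).2 <;> simp [hb, hf]

lemma snd_PsiV (x : V × Bool) : (PsiV f x).2 = x.2 := by
  unfold PsiV
  rw [eps_mk]
  cases hb : x.2 <;> cases hf : (f (vswap x)).2 <;> simp [hb, hf]

lemma PhiV_inj {x y : V × Bool}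
    (hmk : (CDC G).connectedComponentMk x = (CDC G).connectedComponentMk y)
    (h : PhiV f x = PhiV f y) : x = y := by
  unfold PhiV at h
  rw [hmk] at h
  cases hK : eps f ((CDC G).connectedComponentMk y) <;> rw [hK] at h <;>
    simp only [cond] at h
  · exact f.injective h
  · exact f.injective (vswap_injective h)

lemma PsiV_inj {x y : V × Bool}
    (hmk : (CDC G).connectedComponentMk x = (CDC G).connectedComponentMk y)
    (h : PsiV f x = PsiV f y) : x = y := by
  unfold PsiV at h
  rw [show (CDC G).connectedComponentMk (vswap x)
      = sigC G ((CDC G).connectedComponentMk x) from (sigC_mk x).symm,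
    show (CDC G).connectedComponentMk (vswap y)
      = sigC G ((CDC G).connectedComponentMk y) from (sigC_mk y).symm, hmk] at h
  cases hK : eps f (sigC G ((CDC G).connectedComponentMk y)) <;> rw [hK] at h <;>
    simp only [cond] at h
  · exact vswap_injective (f.injective (vswap_injective h))
  · exact vswap_injective (f.injective h)

lemma adj_PhiV {x y : V × Bool}
    (hmk : (CDC G).connectedComponentMk x = (CDC G).connectedComponentMk y) :
    (CDC H).Adj (PhiV f x) (PhiV f y) ↔ (CDC G).Adj x y := by
  unfold PhiV
  rw [hmk]
  cases hK : eps f ((CDC G).connectedComponentMk y) <;> simp only [cond]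
  · exact f.map_adj_iff
  · rw [vswap_adj]; exact f.map_adj_iff

lemma adj_PsiV {x y : V × Bool}
    (hmk : (CDC G).connectedComponentMk x = (CDC G).connectedComponentMk y) :
    (CDC H).Adj (PsiV f x) (PsiV f y) ↔ (CDC G).Adj x y := by
  unfold PsiV
  rw [show (CDC G).connectedComponentMk (vswap x)
      = sigC G ((CDC G).connectedComponentMk x) from (sigC_mk x).symm,
    show (CDC G).connectedComponentMk (vswap y)
      = sigC G ((CDC G).connectedComponentMk y) from (sigC_mk y).symm, hmk]
  cases hK : eps f (sigC G ((CDC G).connectedComponentMk y)) <;> simp only [cond]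
  · rw [vswap_adj, f.map_adj_iff, vswap_adj]
  · rw [f.map_adj_iff, vswap_adj]

end Key

theorem key {V W : Type*} [Fintype V] [Fintype W] {G : SimpleGraph V} {H : SimpleGraph W}
    (f : CDC G ≃g CDC H) :
    ∃ g : (V × Bool) ≃ (W × Bool),
      (∀ p q, (CDC G).Adj p q ↔ (CDC H).Adj (g p) (g q)) ∧ (∀ p, (g p).2 = p.2) := by
  classical
  haveI : Finite ((CDC G).ConnectedComponent) := Quot.finite _
  haveI : Finite ((CDC H).ConnectedComponent) := Quot.finite _
  -- Hall condition
  have hall : ∀ s : Finset ((CDC G).ConnectedComponent),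
      s.card ≤ (s.biUnion (rset f)).card := by
    intro s
    have hinj : Set.InjOn (theta f) ↑(s ×ˢ (Finset.univ : Finset Bool)) :=
      (theta_left_inv f).injective.injOn
    have hmaps : ∀ p ∈ s ×ˢ (Finset.univ : Finset Bool),
        theta f p ∈ (s.biUnion (rset f)) ×ˢ (Finset.univ : Finset Bool) := by
      rintro ⟨K, b⟩ hp
      rw [Finset.mem_product] at hp ⊢
      refine ⟨?_, Finset.mem_univ _⟩
      cases b
      · exact Finset.mem_biUnion.mpr ⟨K, hp.1, by simp [theta, mem_rset]⟩
      · exact Finset.mem_biUnion.mpr ⟨K, hp.1, by simp [theta, mem_rset]⟩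
    have hcard := Finset.card_le_card_of_injOn _ hmaps hinj
    simp only [Finset.card_product, Finset.card_univ, Fintype.card_bool] at hcard
    omega
  obtain ⟨m, minj, hm⟩ :=
    (Finset.all_card_le_biUnion_card_iff_exists_injective (rset f)).mp hall
  haveI : Fintype ((CDC G).ConnectedComponent) := Fintype.ofFinite _
  haveI : Fintype ((CDC H).ConnectedComponent) := Fintype.ofFinite _
  -- the colour-preserving vertex map
  set gf : (V × Bool) → (W × Bool) := fun x =>
    if m ((CDC G).connectedComponentMk x) = phi f ((CDC G).connectedComponentMk x)
    then PhiV f x else PsiV f x with hgf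
  have hcomp : ∀ x, (CDC H).connectedComponentMk (gf x)
      = m ((CDC G).connectedComponentMk x) := by
    intro x
    by_cases h : m ((CDC G).connectedComponentMk x)
        = phi f ((CDC G).connectedComponentMk x)
    · rw [hgf]; simp only [if_pos h]
      rw [comp_PhiV, h]
    · rcases (mem_rset f).mp (hm ((CDC G).connectedComponentMk x)) with h1 | h2
      · exact absurd h1 h
      · rw [hgf]; simp only [if_neg h]
        rw [comp_PsiV, h2]
  have hsnd : ∀ x, (gf x).2 = x.2 := by
    intro x
    rw [hgf]
    by_cases h : m ((CDC G).connectedComponentMk x)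
        = phi f ((CDC G).connectedComponentMk x)
    · simp only [if_pos h]; exact snd_PhiV f x
    · simp only [if_neg h]; exact snd_PsiV f x
  have main : ∀ x y, (CDC G).connectedComponentMk x = (CDC G).connectedComponentMk y →
      ((CDC H).Adj (gf x) (gf y) ↔ (CDC G).Adj x y) := by
    intro x y hmk
    rw [hgf]
    simp only [hmk]
    by_cases h : m ((CDC G).connectedComponentMk y)
        = phi f ((CDC G).connectedComponentMk y)
    · simp only [if_pos h]; exact adj_PhiV f hmk
    · simp only [if_neg h]; exact adj_PsiV f hmk
  have hadj : ∀ x y, (CDC G).Adj x y ↔ (CDC H).Adj (gf x) (gf y) := by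
    intro x y
    constructor
    · intro h
      exact (main x y (SimpleGraph.ConnectedComponent.connectedComponentMk_eq_of_adj h)).mpr h
    · intro h
      have hc : (CDC H).connectedComponentMk (gf x) = (CDC H).connectedComponentMk (gf y) :=
        SimpleGraph.ConnectedComponent.connectedComponentMk_eq_of_adj h
      rw [hcomp, hcomp] at hc
      exact (main x y (minj hc)).mp h
  have hinj : Function.Injective gf := by
    intro x y h
    have hc : (CDC H).connectedComponentMk (gf x) = (CDC H).connectedComponentMk (gf y) := by
      rw [h]
    rw [hcomp, hcomp] at hc
    have hmk := minj hc
    rw [hgf] at h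
    simp only [hmk] at h
    by_cases hb : m ((CDC G).connectedComponentMk y)
        = phi f ((CDC G).connectedComponentMk y)
    · rw [if_pos hb, if_pos hb] at h
      exact PhiV_inj f hmk h
    · rw [if_neg hb, if_neg hb] at h
      exact PsiV_inj f hmk h
  have hcardVW : Fintype.card (V × Bool) = Fintype.card (W × Bool) :=
    Fintype.card_congr f.toEquiv
  have hbij : Function.Bijective gf :=
    (Fintype.bijective_iff_injective_and_card gf).mpr ⟨hinj, hcardVW⟩
  refine ⟨Equiv.ofBijective gf hbij, fun p q => ?_, fun p => hsnd p⟩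
  exact hadj p q

end CDCAux

/-- Finite graphs `G` and `H` are TF-isomorphic iff their canonical
double covers are isomorphic (under an arbitrary isomorphism, not necessarily
colour-preserving). -/
theorem stmt_2 {V W : Type*} [Fintype V] [Fintype W] (G : SimpleGraph V) (H : SimpleGraph W) :
    (∃ α β : V ≃ W, ∀ u v, G.Adj u v ↔ H.Adj (α u) (β v)) ↔
    Nonempty (CDC G ≃g CDC H) := by
  constructor
  · rintro ⟨α, β, hab⟩
    refine ⟨⟨⟨fun p => (cond p.2 (β p.1) (α p.1), p.2),
      fun p => (cond p.2 (β.symm p.1) (α.symm p.1), p.2), ?_, ?_⟩, ?_⟩⟩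
    · rintro ⟨u, b⟩; cases b <;> simp
    · rintro ⟨w, b⟩; cases b <;> simp
    · rintro ⟨u, i⟩ ⟨v, j⟩
      show (CDC H).Adj _ _ ↔ (CDC G).Adj _ _
      simp only [CDCAux.cdc_adj]
      cases i <;> cases j <;> simp
      · exact (hab u v).symm
      · constructor
        · intro h
          exact (G.adj_comm u v).mpr ((hab v u).mpr ((H.adj_comm _ _).mp h))
        · intro h
          exact (H.adj_comm _ _).mpr ((hab v u).mp ((G.adj_comm u v).mp h))
  · rintro ⟨f⟩
    obtain ⟨g, hadj, hsnd⟩ := CDCAux.key f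
    have hsymm_snd : ∀ w : W × Bool, (g.symm w).2 = w.2 := by
      intro w
      have := hsnd (g.symm w)
      rw [Equiv.apply_symm_apply] at this
      exact this.symm
    refine ⟨⟨fun u => (g (u, false)).1, fun w => (g.symm (w, false)).1, ?_, ?_⟩,
      ⟨fun u => (g (u, true)).1, fun w => (g.symm (w, true)).1, ?_, ?_⟩, ?_⟩
    · intro u
      show (g.symm ((g (u, false)).1, false)).1 = u
      have h1 : ((g (u, false)).1, false) = g (u, false) :=
        Prod.ext rfl (hsnd (u, false)).symm
      rw [h1, Equiv.symm_apply_apply]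
    · intro w
      show (g ((g.symm (w, false)).1, false)).1 = w
      have h1 : ((g.symm (w, false)).1, false) = g.symm (w, false) :=
        Prod.ext rfl (hsymm_snd (w, false)).symm
      rw [h1, Equiv.apply_symm_apply]
    · intro u
      show (g.symm ((g (u, true)).1, true)).1 = u
      have h1 : ((g (u, true)).1, true) = g (u, true) :=
        Prod.ext rfl (hsnd (u, true)).symm
      rw [h1, Equiv.symm_apply_apply]
    · intro w
      show (g ((g.symm (w, true)).1, true)).1 = w
      have h1 : ((g.symm (w, true)).1, true) = g.symm (w, true) :=
        Prod.ext rfl (hsymm_snd (w, true)).symm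
      rw [h1, Equiv.apply_symm_apply]
    · intro u v
      have h1 : g (u, false) = ((g (u, false)).1, false) :=
        Prod.ext rfl (hsnd (u, false))
      have h2 : g (v, true) = ((g (v, true)).1, true) :=
        Prod.ext rfl (hsnd (v, true))
      have h3 := hadj (u, false) (v, true)
      rw [h1, h2] at h3
      simp only [CDCAux.cdc_adj] at h3
      simpa using h3
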